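/- Let u_i, u_j, M ∈ ℝ with M ≥ 0 and let t₀ ≤ s ≤ t be real numbers. Suppose agent i's position is x_i(τ) = x_i(t₀) + u_i·(τ − t₀) for all τ ∈ [t₀, t], and neighbor j's position satisfies x_j(τ) = x_j(t₀) + u_j·(τ − t₀) for τ ∈ [t₀, s], and x_j(τ) = x_j(s) + ∫_s^τ w(σ) dσ for τ ∈ [s, t], where w : ℝ → ℝ is integrable on [s, t] with |w(τ)| ≤ M for almost every τ ∈ [s, t]. Then ∫_{t₀}^{t} −u_i·(x_j(τ) − x_i(τ)) dτ ≤ α(t₀)·(s − t₀) + (1/2)·β·(s − t₀)² + α(s)·(t − s) + (1/2)·γ·(t − s)², where α(r) = −u_i·(x_j(r) − x_i(r)), β = −u_i·(u_j − u_i), and γ = |u_i|·M + u_i². -/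

import Mathlib

open MeasureTheory

lemma integral_linear_aux (a b c d : ℝ) :
    ∫ τ in a..b, (c + d * (τ - a)) = c * (b - a) + (1/2) * d * (b - a) ^ 2 := by
  have h : ∀ τ ∈ Set.uIcc a b,
      HasDerivAt (fun τ => c * (τ - a) + d / 2 * (τ - a) ^ 2) (c + d * (τ - a)) τ := by
    intro τ _
    have h1 : HasDerivAt (fun τ : ℝ => τ - a) 1 τ := (hasDerivAt_id τ).sub_const a
    have := ((h1.const_mul c).add ((h1.pow 2).const_mul (d / 2)))
    refine this.congr_deriv ?_
    ring
  rw [intervalIntegral.integral_eq_sub_of_hasDerivAt h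
    (Continuous.intervalIntegrable (by continuity) a b)]
  ring

theorem integral_pairwise_contribution_two_phase_bound
    (ui uj M t0 s t : ℝ) (hM : 0 ≤ M) (ht0s : t0 ≤ s) (hst : s ≤ t)
    (xi xj : ℝ → ℝ)
    (hxi : ∀ τ ∈ Set.Icc t0 t, xi τ = xi t0 + ui * (τ - t0))
    (hxj1 : ∀ τ ∈ Set.Icc t0 s, xj τ = xj t0 + uj * (τ - t0))
    (w : ℝ → ℝ) (hint : IntegrableOn w (Set.Icc s t))
    (hbound : ∀ᵐ σ ∂(volume.restrict (Set.Icc s t)), |w σ| ≤ M)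
    (hxj2 : ∀ τ ∈ Set.Icc s t, xj τ = xj s + ∫ σ in s..τ, w σ) :
    ∫ τ in t0..t, -ui * (xj τ - xi τ) ≤
      (-ui * (xj t0 - xi t0)) * (s - t0) +
        (1 / 2 : ℝ) * (-ui * (uj - ui)) * (s - t0) ^ 2 +
      (-ui * (xj s - xi s)) * (t - s) +
        (1 / 2 : ℝ) * (|ui| * M + ui ^ 2) * (t - s) ^ 2 := by
  set f : ℝ → ℝ := fun τ => -ui * (xj τ - xi τ) with hf
  set g1 : ℝ → ℝ := fun τ => -ui * (xj t0 - xi t0) + (-ui * (uj - ui)) * (τ - t0) with hg1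
  set F : ℝ → ℝ := fun τ => ∫ σ in s..τ, w σ with hF
  set g2 : ℝ → ℝ := fun τ => -ui * (xj s - xi s) - ui * F τ + ui ^ 2 * (τ - s) with hg2
  have ht0t : t0 ≤ t := ht0s.trans hst
  have hsub1 : Set.Icc t0 s ⊆ Set.Icc t0 t := Set.Icc_subset_Icc_right hst
  have hsub2 : Set.Icc s t ⊆ Set.Icc t0 t := Set.Icc_subset_Icc_left ht0s
  -- equality of f and g1 on [t0,s]
  have heq1 : Set.EqOn f g1 (Set.Icc t0 s) := by
    intro τ hτ
    simp only [hf, hg1]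
    rw [hxj1 τ hτ, hxi τ (hsub1 hτ), hxj1 t0 ⟨le_refl _, ht0s⟩, hxi t0 ⟨le_refl _, ht0t⟩]
    ring
  -- equality of f and g2 on [s,t]
  have heq2 : Set.EqOn f g2 (Set.Icc s t) := by
    intro τ hτ
    simp only [hf, hg2, hF]
    rw [hxj2 τ hτ, hxi τ (hsub2 hτ), hxi s ⟨ht0s, hst⟩]
    ring
  -- continuity facts
  have hg1c : Continuous g1 :=
    continuous_const.add (continuous_const.mul (continuous_id.sub continuous_const))
  have hFc : ContinuousOn F (Set.Icc s t) := by
    have := intervalIntegral.continuousOn_primitive_interval (a := s) (b := t) (μ := volume)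
      (f := w) (by rwa [Set.uIcc_of_le hst])
    rwa [Set.uIcc_of_le hst] at this
  have hg2c : ContinuousOn g2 (Set.Icc s t) :=
    (continuousOn_const.sub (continuousOn_const.mul hFc)).add
      (continuous_const.mul (continuous_id.sub continuous_const)).continuousOn
  -- interval integrability
  have hi1 : IntervalIntegrable g1 volume t0 s := hg1c.intervalIntegrable t0 s
  have hi2 : IntervalIntegrable g2 volume s t := by
    apply ContinuousOn.intervalIntegrable
    rwa [Set.uIcc_of_le hst]
  have hif1 : IntervalIntegrable f volume t0 s := by
    rw [intervalIntegrable_iff_integrableOn_Ioc_of_le ht0s]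
    exact (hi1.1).congr_fun (fun x hx => (heq1 (Set.Ioc_subset_Icc_self hx)).symm)
      measurableSet_Ioc
  have hif2 : IntervalIntegrable f volume s t := by
    rw [intervalIntegrable_iff_integrableOn_Ioc_of_le hst]
    exact (hi2.1).congr_fun (fun x hx => (heq2 (Set.Ioc_subset_Icc_self hx)).symm)
      measurableSet_Ioc
  -- split
  have hsplit : (∫ τ in t0..t, f τ) = (∫ τ in t0..s, f τ) + ∫ τ in s..t, f τ :=
    (intervalIntegral.integral_add_adjacent_intervals hif1 hif2).symm
  -- phase 1 exact value
  have h1 : (∫ τ in t0..s, f τ) =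
      (-ui * (xj t0 - xi t0)) * (s - t0) + (1/2 : ℝ) * (-ui * (uj - ui)) * (s - t0) ^ 2 := by
    rw [intervalIntegral.integral_congr (by rwa [Set.uIcc_of_le ht0s])]
    exact integral_linear_aux t0 s _ _
  -- key bound on F
  have hFbound : ∀ τ ∈ Set.Icc s t, |F τ| ≤ M * (τ - s) := by
    intro τ hτ
    have hτ1 : s ≤ τ := hτ.1
    have hiw : IntervalIntegrable w volume s τ := by
      rw [intervalIntegrable_iff_integrableOn_Ioc_of_le hτ1]
      exact hint.mono_set ((Set.Ioc_subset_Icc_self).trans (Set.Icc_subset_Icc_right hτ.2))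
    have h1 : |F τ| ≤ ∫ σ in s..τ, |w σ| :=
      intervalIntegral.abs_integral_le_integral_abs hτ1
    have h2 : (∫ σ in s..τ, |w σ|) ≤ ∫ σ in s..τ, M := by
      apply intervalIntegral.integral_mono_ae_restrict hτ1 hiw.abs
        (intervalIntegrable_const)
      exact ae_mono (Measure.restrict_mono (Set.Icc_subset_Icc_right hτ.2) le_rfl) hbound
    rw [intervalIntegral.integral_const, smul_eq_mul, mul_comm] at h2
    linarith
  -- phase 2 bound
  have h2 : (∫ τ in s..t, f τ) ≤
      (-ui * (xj s - xi s)) * (t - s) + (1/2 : ℝ) * (|ui| * M + ui ^ 2) * (t - s) ^ 2 := by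
    rw [intervalIntegral.integral_congr (by rwa [Set.uIcc_of_le hst])]
    have hmono : (∫ τ in s..t, g2 τ) ≤
        ∫ τ in s..t, (-ui * (xj s - xi s) + (|ui| * M + ui ^ 2) * (τ - s)) := by
      apply intervalIntegral.integral_mono_on hst hi2
        (Continuous.intervalIntegrable
          (continuous_const.add (continuous_const.mul (continuous_id.sub continuous_const))) s t)
      intro τ hτ
      simp only [hg2]
      have hkey : -ui * F τ ≤ |ui| * M * (τ - s) := by
        calc -ui * F τ ≤ |(-ui) * F τ| := le_abs_self _
          _ = |ui| * |F τ| := by rw [abs_mul, abs_neg]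
          _ ≤ |ui| * (M * (τ - s)) := by
              exact mul_le_mul_of_nonneg_left (hFbound τ hτ) (abs_nonneg ui)
          _ = |ui| * M * (τ - s) := by ring
      simp only [Pi.add_apply, Pi.mul_apply, Pi.sub_apply, id_eq]
      nlinarith [hkey]
    calc (∫ τ in s..t, g2 τ) ≤ _ := hmono
      _ = (-ui * (xj s - xi s)) * (t - s) + (1/2 : ℝ) * (|ui| * M + ui ^ 2) * (t - s) ^ 2 :=
        integral_linear_aux s t _ _
  calc (∫ τ in t0..t, f τ) = (∫ τ in t0..s, f τ) + ∫ τ in s..t, f τ := hsplit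
    _ ≤ _ := by rw [h1]; linarith [h2]
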